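/- Pointwise linear-algebra version of the Nakano criterion: a Hermitian r×r matrix of (1,1)-forms R (representing curvature at a point in a unitary frame) satisfies R_{ij̄αβ̄} u^{iα} ū^{jβ} ≥ 0 for all u ∈ ℂ^r ⊗ ℂ^n if and only if R = −B ∧ B̄ᵀ for some r×N matrix B of (0,1)-forms; moreover the positivity is strict (positive for all u ≠ 0) if and only if the N × rn matrix 𝐁 = (B_{ip ᾱ}) formed from the coefficients of B has rank rn. -/

import Mathlib

open Finset

/-- Pointwise model of the Chern curvature of a rank-`r` Hermitian bundle over an
`n`-dimensional complex manifold, in a unitary frame: `R i j α β` is the coefficient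
`R_{i j̄ α β̄}`. -/
abbrev CurvTensor (n r : ℕ) : Type := Fin r → Fin r → Fin n → Fin n → ℂ

/-- Hermitian symmetry `R_{i j̄ α β̄} = conj (R_{j ī β ᾱ})`. -/
def IsHermitianCurv {n r : ℕ} (R : CurvTensor n r) : Prop :=
  ∀ i j α β, R i j α β = (starRingEnd ℂ) (R j i β α)

/-- The Nakano quadratic form `R_{i j̄ α β̄} u^{iα} conj (u^{jβ})`. -/
noncomputable def nakanoQ {n r : ℕ} (R : CurvTensor n r) (u : Fin r → Fin n → ℂ) : ℂ :=
  ∑ i, ∑ j, ∑ α, ∑ β, R i j α β * u i α * (starRingEnd ℂ) (u j β)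

/-- The dual Nakano quadratic form `R_{i j̄ α β̄} v^{j̄α} conj (v^{īβ})`. -/
noncomputable def dualNakanoQ {n r : ℕ} (R : CurvTensor n r) (v : Fin r → Fin n → ℂ) : ℂ :=
  ∑ i, ∑ j, ∑ α, ∑ β, R i j α β * v j α * (starRingEnd ℂ) (v i β)

/-- The dual Nakano quadratic form in the type-II convention:
`R_{i j̄ α β̄} v^{i β̄} conj (v^{j ᾱ})`. -/
noncomputable def dualNakanoQ' {n r : ℕ} (R : CurvTensor n r) (v : Fin r → Fin n → ℂ) : ℂ :=
  ∑ i, ∑ j, ∑ α, ∑ β, R i j α β * v i β * (starRingEnd ℂ) (v j α)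

/-- The cross curvature term `R_{i j̄ α β̄} u^{iα} conj (v'^{jβ})`. -/
noncomputable def crossQ {n r : ℕ} (R : CurvTensor n r) (u v' : Fin r → Fin n → ℂ) : ℂ :=
  ∑ i, ∑ j, ∑ α, ∑ β, R i j α β * u i α * (starRingEnd ℂ) (v' j β)

/-- The Griffiths quadratic form `⟨R(v,v̄)ξ,ξ⟩ = R_{i j̄ α β̄} ξ^i conj(ξ^j) v^α conj(v^β)`. -/
noncomputable def griffithsQ {n r : ℕ} (R : CurvTensor n r) (v : Fin n → ℂ)
    (ξ : Fin r → ℂ) : ℂ :=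
  ∑ i, ∑ j, ∑ α, ∑ β, R i j α β * ξ i * (starRingEnd ℂ) (ξ j) * v α * (starRingEnd ℂ) (v β)

/-- The curvature has the form `R = −B∧B̄ᵀ + A∧Āᵀ` in a unitary frame, written on
coefficients: `R_{i j̄ α β̄} = ∑_p A_{jpα} conj(A_{ipβ}) + ∑_p B_{jpβ̄} conj(B_{ipᾱ})`,
where `A` is an `r×N` matrix of `(1,0)`-forms (coefficients `A i p α`) and `B` is an
`r×N` matrix of `(0,1)`-forms (coefficients `B i p α` of `dz̄^α`). -/
def HasDecomp {n r N : ℕ} (R : CurvTensor n r) (A B : Fin r → Fin N → Fin n → ℂ) : Prop :=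
  ∀ i j α β, R i j α β =
    (∑ p, A j p α * (starRingEnd ℂ) (A i p β)) + (∑ p, B j p β * (starRingEnd ℂ) (B i p α))

/-- The `N × (r·n)` coefficient matrix `𝐁 = (B_{i p ᾱ})_{p, (i,α)}` of a matrix of forms. -/
def coeffMat {n r N : ℕ} (B : Fin r → Fin N → Fin n → ℂ) : Matrix (Fin N) (Fin r × Fin n) ℂ :=
  Matrix.of fun p q => B q.1 p q.2

/-- The span of the `(1,0)`-covectors `{A_{ip}}` appearing in `A`. -/
noncomputable def covSpanA {n r N : ℕ} (A : Fin r → Fin N → Fin n → ℂ) : Submodule ℂ (Fin n → ℂ) :=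
  Submodule.span ℂ {x | ∃ i p, x = fun α => A i p α}

/-- The span of the `(1,0)`-covectors `{conj B_{ip}}` obtained by conjugating the
`(0,1)`-forms appearing in `B`. -/
noncomputable def covSpanBbar {n r N : ℕ} (B : Fin r → Fin N → Fin n → ℂ) : Submodule ℂ (Fin n → ℂ) :=
  Submodule.span ℂ {x | ∃ i p, x = fun α => (starRingEnd ℂ) (B i p α)}

/-- Strongly decomposable curvature condition of type I at a point, with the sign of the
quadratic forms prescribed by the predicate `P` (`0 < ·` : positive, `0 ≤ ·` : non-negative,
`· < 0` : negative, `· ≤ 0` : non-positive): there is a decomposition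
`T_x^{1,0}X = U ⊕ V` such that the curvature is Nakano `P`-definite on `E⊗U`, dual Nakano
`P`-definite on `Ē⊗V`, and the cross curvature terms vanish. -/
def TypeIAt {n r : ℕ} (P : ℝ → Prop) (R : CurvTensor n r) : Prop :=
  ∃ U V : Submodule ℂ (Fin n → ℂ), IsCompl U V ∧
    (∀ u : Fin r → Fin n → ℂ, (∀ i, u i ∈ U) → u ≠ 0 →
      ∃ c : ℝ, P c ∧ nakanoQ R u = (c : ℂ)) ∧
    (∀ u v' : Fin r → Fin n → ℂ, (∀ i, u i ∈ U) → (∀ j, v' j ∈ V) → crossQ R u v' = 0) ∧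
    (∀ v : Fin r → Fin n → ℂ, (∀ j, v j ∈ V) → v ≠ 0 →
      ∃ c : ℝ, P c ∧ dualNakanoQ R v = (c : ℂ))

/-- Strongly decomposable curvature condition of type II at a point, with the sign of the
quadratic forms prescribed by the predicate `P`: there is an orthogonal decomposition
`E_x = E₁ ⊕ E₂` making the curvature block diagonal, with the curvature Nakano
`P`-definite on `E₁ ⊗ T^{1,0}` and dual Nakano `P`-definite on `E₂ ⊗ T^{0,1}`. -/
def TypeIIAt {n r : ℕ} (P : ℝ → Prop) (R : CurvTensor n r) : Prop :=
  ∃ E1 E2 : Submodule ℂ (Fin r → ℂ), IsCompl E1 E2 ∧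
    (∀ ξ ∈ E1, ∀ η ∈ E2, (∑ i, ξ i * (starRingEnd ℂ) (η i)) = 0) ∧
    (∀ ξ ∈ E1, ∀ η ∈ E2, ∀ α β,
      (∑ i, ∑ j, R i j α β * ξ i * (starRingEnd ℂ) (η j)) = 0 ∧
      (∑ i, ∑ j, R i j α β * η i * (starRingEnd ℂ) (ξ j)) = 0) ∧
    (∀ u : Fin r → Fin n → ℂ, (∀ α, (fun i => u i α) ∈ E1) → u ≠ 0 →
      ∃ c : ℝ, P c ∧ nakanoQ R u = (c : ℂ)) ∧
    (∀ v : Fin r → Fin n → ℂ, (∀ β, (fun i => v i β) ∈ E2) → v ≠ 0 →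
      ∃ c : ℝ, P c ∧ dualNakanoQ' R v = (c : ℂ))

/-- Decomposable non-negativity at a point (Finski): `(1/2π)⟨R(v,v̄)ξ,ξ⟩` is a finite sum
of squared moduli of sesquilinear forms `l_p` and linear forms `l'_p` in `(v,ξ)`. -/
def DecomposablyNonnegAt {n r : ℕ} (R : CurvTensor n r) : Prop :=
  ∃ (N : ℕ) (l l' : Fin N → Fin n → Fin r → ℂ),
    ∀ (v : Fin n → ℂ) (ξ : Fin r → ℂ),
      (1 / (2 * (Real.pi : ℂ))) * griffithsQ R v ξ =
        (((∑ p, Complex.normSq (∑ α, ∑ i, l p α i * v α * (starRingEnd ℂ) (ξ i)))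
          + ∑ p, Complex.normSq (∑ α, ∑ i, l' p α i * v α * ξ i) : ℝ) : ℂ)

/-- Decomposable positivity at a point: decomposable non-negativity together with the
non-vanishing of `⟨R(v,v̄)ξ,ξ⟩` for `v, ξ ≠ 0`. -/
def DecomposablyPosAt {n r : ℕ} (R : CurvTensor n r) : Prop :=
  DecomposablyNonnegAt R ∧
    ∀ (v : Fin n → ℂ) (ξ : Fin r → ℂ), v ≠ 0 → ξ ≠ 0 → griffithsQ R v ξ ≠ 0

section NakanoAux
open Finset Matrix ComplexOrder

/-- The `(rn)×(rn)` matrix associated to a curvature tensor. -/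
def nakanoMat {n r : ℕ} (R : CurvTensor n r) : Matrix (Fin r × Fin n) (Fin r × Fin n) ℂ :=
  Matrix.of fun q q' => R q.1 q'.1 q.2 q'.2

lemma nakano_dot_eq {n r : ℕ} (R : CurvTensor n r) (x : Fin r × Fin n → ℂ) :
    star x ⬝ᵥ nakanoMat R *ᵥ x = nakanoQ R (fun i α => (starRingEnd ℂ) (x (i, α))) := by
  simp only [nakanoQ, dotProduct, mulVec, nakanoMat, Matrix.of_apply, Fintype.sum_prod_type,
    Pi.star_apply, Complex.star_def, Finset.mul_sum, Complex.conj_conj]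
  refine Finset.sum_congr rfl fun i _ => ?_
  rw [Finset.sum_comm]
  exact Finset.sum_congr rfl fun j _ => Finset.sum_congr rfl fun α _ =>
    Finset.sum_congr rfl fun β _ => by ring

lemma nakanoMat_herm {n r : ℕ} (R : CurvTensor n r) (hH : IsHermitianCurv R) :
    (nakanoMat R).IsHermitian := by
  ext q q'
  simp only [conjTranspose_apply, nakanoMat, Matrix.of_apply, Complex.star_def]
  exact (hH q.1 q'.1 q.2 q'.2).symm

lemma nakanoQ_eq_dot {n r : ℕ} (R : CurvTensor n r) (u : Fin r → Fin n → ℂ) :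
    nakanoQ R u =
      star (fun q : Fin r × Fin n => (starRingEnd ℂ) (u q.1 q.2)) ⬝ᵥ
        nakanoMat R *ᵥ (fun q => (starRingEnd ℂ) (u q.1 q.2)) := by
  rw [nakano_dot_eq]
  congr 1
  funext i α
  simp

lemma nakanoMat_eq_of_decomp {n r N : ℕ} {R : CurvTensor n r}
    {B : Fin r → Fin N → Fin n → ℂ}
    (hB : ∀ i j α β, R i j α β = ∑ p, B j p β * (starRingEnd ℂ) (B i p α)) :
    nakanoMat R = (coeffMat B)ᴴ * coeffMat B := by
  ext q q'
  simp only [nakanoMat, Matrix.of_apply, Matrix.mul_apply, conjTranspose_apply, coeffMat,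
    Complex.star_def]
  rw [hB q.1 q'.1 q.2 q'.2]
  exact Finset.sum_congr rfl fun p _ => mul_comm _ _

lemma decomp_of_nakanoMat_eq {n r : ℕ} {R : CurvTensor n r}
    (C : Matrix (Fin r × Fin n) (Fin r × Fin n) ℂ) (hC : nakanoMat R = Cᴴ * C) :
    ∀ i j α β, R i j α β =
      ∑ p : Fin (r * n), C (finProdFinEquiv.symm p) (j, β) *
        (starRingEnd ℂ) (C (finProdFinEquiv.symm p) (i, α)) := by
  intro i j α β
  rw [Equiv.sum_comp (finProdFinEquiv.symm : Fin (r * n) ≃ Fin r × Fin n)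
    (fun q => C q (j, β) * (starRingEnd ℂ) (C q (i, α)))]
  have h1 : R i j α β = (Cᴴ * C) (i, α) (j, β) := by
    rw [← hC]; rfl
  rw [h1]
  simp only [Matrix.mul_apply, conjTranspose_apply, Complex.star_def]
  exact Finset.sum_congr rfl fun q _ => mul_comm _ _
end NakanoAux

/-- pointwise Nakano criterion: a Hermitian `r×r` matrix of `(1,1)`-forms
`R` is Nakano non-negative iff `R = −B∧B̄ᵀ` for some `r×N` matrix `B` of `(0,1)`-forms
(on coefficients: `R_{i j̄ α β̄} = ∑_p B_{jpβ̄} conj(B_{ipᾱ})`); and `R` is Nakano positive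
iff moreover the `N × rn` coefficient matrix `𝐁` can be chosen with rank `r·n`. -/

theorem nakano_criterion {n r : ℕ} (R : CurvTensor n r) (hH : IsHermitianCurv R) :
    ((∀ u : Fin r → Fin n → ℂ, ∃ c : ℝ, 0 ≤ c ∧ nakanoQ R u = (c : ℂ)) ↔
      ∃ (N : ℕ) (B : Fin r → Fin N → Fin n → ℂ),
        ∀ i j α β, R i j α β = ∑ p, B j p β * (starRingEnd ℂ) (B i p α)) ∧
    ((∀ u : Fin r → Fin n → ℂ, u ≠ 0 → ∃ c : ℝ, 0 < c ∧ nakanoQ R u = (c : ℂ)) ↔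
      ∃ (N : ℕ) (B : Fin r → Fin N → Fin n → ℂ),
        (∀ i j α β, R i j α β = ∑ p, B j p β * (starRingEnd ℂ) (B i p α)) ∧
        Matrix.rank (coeffMat B) = r * n) := by
  open Matrix ComplexOrder in
  constructor
  · constructor
    · intro h
      have psd : (nakanoMat R).PosSemidef := by
        refine Matrix.PosSemidef.of_dotProduct_mulVec_nonneg (nakanoMat_herm R hH) fun x => ?_
        obtain ⟨c, hc, hq⟩ := h (fun i α => (starRingEnd ℂ) (x (i, α)))
        rw [nakano_dot_eq, hq]
        exact Complex.zero_le_real.2 hc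
      open MatrixOrder in obtain ⟨C, hC⟩ := CStarAlgebra.nonneg_iff_eq_star_mul_self.mp psd.nonneg
      rw [star_eq_conjTranspose] at hC
      exact ⟨r * n, fun i p α => C (finProdFinEquiv.symm p) (i, α),
        decomp_of_nakanoMat_eq C hC⟩
    · rintro ⟨N, B, hB⟩ u
      have hM := nakanoMat_eq_of_decomp hB
      have psd : (nakanoMat R).PosSemidef := hM ▸ Matrix.posSemidef_conjTranspose_mul_self _
      set x : Fin r × Fin n → ℂ := fun q => (starRingEnd ℂ) (u q.1 q.2) with hxdef
      have hx : nakanoQ R u = star x ⬝ᵥ nakanoMat R *ᵥ x := nakanoQ_eq_dot R u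
      have h0 := psd.dotProduct_mulVec_nonneg x
      rw [Complex.le_def] at h0
      refine ⟨(star x ⬝ᵥ nakanoMat R *ᵥ x).re, by simpa using h0.1, ?_⟩
      rw [hx, ← Complex.re_add_im (star x ⬝ᵥ nakanoMat R *ᵥ x)]
      simp [← h0.2]
  · constructor
    · intro h
      have pd : (nakanoMat R).PosDef := by
        refine Matrix.PosDef.of_dotProduct_mulVec_pos (nakanoMat_herm R hH) fun x hx => ?_
        have hu : (fun i α => (starRingEnd ℂ) (x (i, α))) ≠ 0 := by
          intro h0
          apply hx
          funext q
          have := congrFun (congrFun h0 q.1) q.2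
          simpa using this
        obtain ⟨c, hc, hq⟩ := h _ hu
        rw [nakano_dot_eq, hq]
        exact Complex.zero_lt_real.2 hc
      open MatrixOrder in obtain ⟨C, hC⟩ :=
        CStarAlgebra.nonneg_iff_eq_star_mul_self.mp pd.posSemidef.nonneg
      rw [star_eq_conjTranspose] at hC
      have hdec := decomp_of_nakanoMat_eq C hC
      refine ⟨r * n, fun i p α => C (finProdFinEquiv.symm p) (i, α), hdec, ?_⟩
      rw [← Matrix.rank_conjTranspose_mul_self, ← nakanoMat_eq_of_decomp hdec,
        Matrix.rank_of_isUnit _ pd.isUnit]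
      simp [Fintype.card_prod]
    · rintro ⟨N, B, hB, hrank⟩ u hu
      have hM := nakanoMat_eq_of_decomp hB
      have psd : (nakanoMat R).PosSemidef := hM ▸ Matrix.posSemidef_conjTranspose_mul_self _
      set x : Fin r × Fin n → ℂ := fun q => (starRingEnd ℂ) (u q.1 q.2) with hxdef
      have hx : nakanoQ R u = star x ⬝ᵥ nakanoMat R *ᵥ x := nakanoQ_eq_dot R u
      have h0 := psd.dotProduct_mulVec_nonneg x
      rw [Complex.le_def] at h0
      have hzne : star x ⬝ᵥ nakanoMat R *ᵥ x ≠ 0 := by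
        intro hz
        have hmv : nakanoMat R *ᵥ x = 0 := (psd.dotProduct_mulVec_zero_iff x).mp hz
        rw [hM, Matrix.conjTranspose_mul_self_mulVec_eq_zero] at hmv
        have hker : LinearMap.ker (coeffMat B).mulVecLin = ⊥ := by
          have h1 := LinearMap.finrank_range_add_finrank_ker (coeffMat B).mulVecLin
          have h2 : Module.finrank ℂ (Fin r × Fin n → ℂ) = r * n := by
            simp [Module.finrank_pi, Fintype.card_prod]
          rw [h2] at h1
          have h3 : Matrix.rank (coeffMat B) +
              Module.finrank ℂ (LinearMap.ker (coeffMat B).mulVecLin) = r * n := h1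
          rw [hrank] at h3
          exact Submodule.finrank_eq_zero.mp (by omega)
        have hx0 : x = 0 := by
          have : x ∈ LinearMap.ker (coeffMat B).mulVecLin := hmv
          rw [hker] at this
          simpa using this
        apply hu
        funext i α
        have := congrFun hx0 (i, α)
        simpa [hxdef] using this
      refine ⟨(star x ⬝ᵥ nakanoMat R *ᵥ x).re, ?_, ?_⟩
      · rcases lt_or_eq_of_le (by simpa using h0.1 :
          (0 : ℝ) ≤ (star x ⬝ᵥ nakanoMat R *ᵥ x).re) with h | h
        · exact h
        · exact absurd (Complex.ext h.symm (by simpa using h0.2.symm)) hzne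
      · rw [hx, ← Complex.re_add_im (star x ⬝ᵥ nakanoMat R *ᵥ x)]
        simp [← h0.2]
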